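/- arXiv:2003.12639 — 7 statements merged into one kernel-verified Lean document; each statement's English description precedes it below -/
import Mathlib

section
/- A permutation σ of [n] is Baxter if and only if its inverse σ^{-1} is Baxter. -/
/-- A permutation σ of [n] is Baxter if there are no indices i < j < k such that
σ(j+1) < σ(i) < σ(k) < σ(j) or σ(j) < σ(k) < σ(i) < σ(j+1). -/
def IsBaxter {n : ℕ} (σ : Equiv.Perm (Fin n)) : Prop :=
  ¬ ∃ i j jp k : Fin n, i < j ∧ j < k ∧ (jp : ℕ) = (j : ℕ) + 1 ∧
      ((σ jp < σ i ∧ σ i < σ k ∧ σ k < σ j) ∨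
        (σ j < σ k ∧ σ k < σ i ∧ σ i < σ jp))

/-- Discrete intermediate value: if `P q` holds and `P r` fails with `q ≤ r`,
there is a crossing point. -/
lemma baxter_cross (P : ℕ → Prop) : ∀ r q, q ≤ r → P q → ¬ P r →
    ∃ t, q ≤ t ∧ t < r ∧ P t ∧ ¬ P (t + 1) := by
  intro r
  induction r with
  | zero =>
    intro q hq hPq hPr
    interval_cases q
    exact absurd hPq hPr
  | succ r ih =>
    intro q hq hPq hPr
    rcases eq_or_lt_of_le hq with h' | h'
    · exact absurd (h' ▸ hPq) hPr
    · have hq' : q ≤ r := Nat.lt_succ_iff.mp h'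
      by_cases h : P r
      · exact ⟨r, hq', Nat.lt_succ_self r, h, hPr⟩
      · obtain ⟨t, h1, h2, h3, h4⟩ := ih q hq' hPq h
        exact ⟨t, h1, Nat.lt_succ_of_lt h2, h3, h4⟩

lemma baxter_key {n : ℕ} (σ : Equiv.Perm (Fin n)) (h : ¬ IsBaxter σ⁻¹) :
    ¬ IsBaxter σ := by
  rw [IsBaxter, not_not] at h
  rw [IsBaxter, not_not]
  obtain ⟨a, b, bp, c, hab, hbc, hbp, hcase⟩ := h
  rcases hcase with ⟨h1, h2, h3⟩ | ⟨h1, h2, h3⟩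
  · -- σ⁻¹ bp < σ⁻¹ a < σ⁻¹ c < σ⁻¹ b
    set p := σ⁻¹ bp with hp'
    set q := σ⁻¹ a with hq'
    set r := σ⁻¹ c with hr'
    set s := σ⁻¹ b with hs'
    have hp : σ p = bp := σ.apply_symm_apply bp
    have hq : σ q = a := σ.apply_symm_apply a
    have hs : σ s = b := σ.apply_symm_apply b
    obtain ⟨t, hqt, htr, hPt, hPt1⟩ :=
      baxter_cross (fun t => ∃ ht : t < n, σ ⟨t, ht⟩ < b) r q
        (le_of_lt h2) ⟨q.isLt, by simpa [Fin.eta, hq] using hab⟩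
        (by rintro ⟨ht, hlt⟩
            rw [show (⟨(r : ℕ), ht⟩ : Fin n) = r from Fin.eta r ht,
              show σ (σ⁻¹ c) = c from σ.apply_symm_apply c] at hlt
            exact absurd hlt (not_lt.mpr (le_of_lt hbc)))
    have hrn := r.isLt
    have hsn := s.isLt
    have hrs : (r : ℕ) < (s : ℕ) := h3
    have hpq : (p : ℕ) < (q : ℕ) := h1
    have htn : t < n := by omega
    have ht1n : t + 1 < n := by omega
    obtain ⟨_, hσt⟩ := hPt
    refine ⟨p, ⟨t, htn⟩, ⟨t + 1, ht1n⟩, s, ?_, ?_, rfl, Or.inr ⟨?_, ?_, ?_⟩⟩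
    · exact Fin.lt_def.mpr (by simp only [] ; omega)
    · exact Fin.lt_def.mpr (by simp only [] ; omega)
    · rw [hs]; exact hσt
    · rw [hs, hp]; exact Fin.lt_def.mpr (by omega)
    · -- σ p < σ ⟨t+1, _⟩
      set jp : Fin n := ⟨t + 1, ht1n⟩ with hjp'
      have hge : (b : ℕ) ≤ (σ jp : ℕ) :=
        not_lt.mp (fun hl => hPt1 ⟨ht1n, Fin.lt_def.mpr hl⟩)
      have hjps : jp ≠ s := Fin.ne_of_lt (Fin.lt_def.mpr (by simp only [hjp'] ; omega))
      have hjpp : jp ≠ p := Fin.ne_of_gt (Fin.lt_def.mpr (by simp only [hjp'] ; omega))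
      have hne1 : (σ jp : ℕ) ≠ (b : ℕ) := fun hh =>
        hjps (σ.injective (by rw [hs]; exact Fin.ext hh))
      have hne2 : (σ jp : ℕ) ≠ (bp : ℕ) := fun hh =>
        hjpp (σ.injective (by rw [hp]; exact Fin.ext hh))
      rw [hp]; exact Fin.lt_def.mpr (by omega)
  · -- σ⁻¹ b < σ⁻¹ c < σ⁻¹ a < σ⁻¹ bp
    set p := σ⁻¹ b with hp'
    set q := σ⁻¹ c with hq'
    set r := σ⁻¹ a with hr'
    set s := σ⁻¹ bp with hs'
    have hp : σ p = b := σ.apply_symm_apply b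
    have hq : σ q = c := σ.apply_symm_apply c
    have hs : σ s = bp := σ.apply_symm_apply bp
    have hqs : (q : ℕ) < (s : ℕ) := lt_trans h2 h3
    have hcbp : (bp : ℕ) < (c : ℕ) := by
      have hne : (c : ℕ) ≠ (bp : ℕ) := fun hh => by
        have hcbp : c = bp := Fin.ext hh
        have hqs' : q = s := by rw [hq', hs', hcbp]
        exact absurd hqs' (Fin.ne_of_lt (lt_trans h2 h3))
      have hbc' : (b : ℕ) < (c : ℕ) := hbc
      omega
    obtain ⟨t, hqt, htr, hPt, hPt1⟩ :=
      baxter_cross (fun t => ∃ ht : t < n, bp < σ ⟨t, ht⟩) r q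
        (le_of_lt h2)
        ⟨q.isLt, by
          rw [show (⟨(q : ℕ), q.isLt⟩ : Fin n) = q from Fin.eta q q.isLt, hq]
          exact Fin.lt_def.mpr hcbp⟩
        (by rintro ⟨ht, hlt⟩
            rw [show (⟨(r : ℕ), ht⟩ : Fin n) = r from Fin.eta r ht,
              show σ (σ⁻¹ a) = a from σ.apply_symm_apply a] at hlt
            have hab' : (a : ℕ) < (b : ℕ) := hab
            have : (bp : ℕ) < (a : ℕ) := hlt
            omega)
    have hrn := r.isLt
    have hsn := s.isLt
    have hrs : (r : ℕ) < (s : ℕ) := h3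
    have hpq : (p : ℕ) < (q : ℕ) := h1
    have htn : t < n := by omega
    have ht1n : t + 1 < n := by omega
    obtain ⟨_, hσt⟩ := hPt
    refine ⟨p, ⟨t, htn⟩, ⟨t + 1, ht1n⟩, s, ?_, ?_, rfl, Or.inl ⟨?_, ?_, ?_⟩⟩
    · exact Fin.lt_def.mpr (by simp only [] ; omega)
    · exact Fin.lt_def.mpr (by simp only [] ; omega)
    · -- σ ⟨t+1,_⟩ < σ p
      set jp : Fin n := ⟨t + 1, ht1n⟩ with hjp'
      have hge : (σ jp : ℕ) ≤ (bp : ℕ) :=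
        not_lt.mp (fun hl => hPt1 ⟨ht1n, Fin.lt_def.mpr hl⟩)
      have hjps : jp ≠ s := Fin.ne_of_lt (Fin.lt_def.mpr (by simp only [hjp'] ; omega))
      have hjpp : jp ≠ p := Fin.ne_of_gt (Fin.lt_def.mpr (by simp only [hjp'] ; omega))
      have hne1 : (σ jp : ℕ) ≠ (bp : ℕ) := fun hh =>
        hjps (σ.injective (by rw [hs]; exact Fin.ext hh))
      have hne2 : (σ jp : ℕ) ≠ (b : ℕ) := fun hh =>
        hjpp (σ.injective (by rw [hp]; exact Fin.ext hh))
      rw [hp]; exact Fin.lt_def.mpr (by omega)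
    · rw [hs, hp]; exact Fin.lt_def.mpr (by omega)
    · rw [hs]; exact hσt

/-- A permutation is Baxter if and only if its inverse is Baxter. -/
theorem isBaxter_inv_iff {n : ℕ} (σ : Equiv.Perm (Fin n)) :
    IsBaxter σ ↔ IsBaxter σ⁻¹ := by
  have main : ∀ τ : Equiv.Perm (Fin n), IsBaxter τ → IsBaxter τ⁻¹ :=
    fun τ hτ => of_not_not fun h' => baxter_key τ h' hτ
  refine ⟨main σ, fun h => ?_⟩
  simpa using main σ⁻¹ h
end

section
/- The family of walks {Z^{(t)}}_{t∈I} associated with a plane walk W with increments in A is a coalescent-walk process: for all t ≤ t' in I, the monotone coupling property holds, i.e., if Z^{(t)}_k ≥ Z^{(t')}_k at some time k then Z^{(t)}_{k'} ≥ Z^{(t')}_{k'} for all k' ≥ k. -/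
/-- The set A of admissible increments: (+1,-1) together with (-i,+j) for i,j ≥ 0. -/
def AdmissibleSteps : Set (ℤ × ℤ) :=
  {((1 : ℤ), (-1 : ℤ))} ∪ {p : ℤ × ℤ | p.1 ≤ 0 ∧ 0 ≤ p.2}

/-- The family of walks associated with a plane walk W = (X,Y) with increments in A
(via the coalescent recursion) is a coalescent-walk process: the order between two
trajectories, once established, is preserved at all later times. -/
theorem wcp_is_coalescent
    (I : Set ℤ) (hI : I.OrdConnected) (X Y : ℤ → ℤ)
    (hinc : ∀ k ∈ I, (k - 1) ∈ I → (X k - X (k - 1), Y k - Y (k - 1)) ∈ AdmissibleSteps)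
    (Z : ℤ → ℤ → ℤ)
    (hstart : ∀ t ∈ I, Z t t = 0)
    (hrec : ∀ t ∈ I, ∀ k ∈ I, t < k →
      (0 ≤ Z t (k - 1) → Z t k = Z t (k - 1) + (Y k - Y (k - 1))) ∧
      (Z t (k - 1) < 0 → Z t (k - 1) - (X k - X (k - 1)) < 0 →
        Z t k = Z t (k - 1) - (X k - X (k - 1))) ∧
      (Z t (k - 1) < 0 → 0 ≤ Z t (k - 1) - (X k - X (k - 1)) →
        Z t k = Y k - Y (k - 1)))
    (t : ℤ) (ht : t ∈ I) (t' : ℤ) (ht' : t' ∈ I) (htt' : t ≤ t')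
    (k : ℤ) (hk : k ∈ I) (hkt : t' ≤ k) (hcmp : Z t' k ≤ Z t k) :
    ∀ k' ∈ I, k ≤ k' → Z t' k' ≤ Z t k' := by
  have key : ∀ k' : ℤ, k ≤ k' → (k' ∈ I → Z t' k' ≤ Z t k') := by
    refine fun k' hkk' => Int.le_induction (motive := fun m _ => m ∈ I → Z t' m ≤ Z t m) (fun _ => hcmp) ?_ k' hkk'
    · intro n hn ih hn1I
      have hnI : n ∈ I := hI.out hk hn1I ⟨hn, by linarith⟩
      have hih : Z t' n ≤ Z t n := ih hnI
      have hstep := hinc (n + 1) hn1I (by simpa using hnI)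
      have hrt := hrec t ht (n + 1) hn1I (by linarith)
      have hrt' := hrec t' ht' (n + 1) hn1I (by linarith)
      simp only [add_sub_cancel_right] at hrt hrt' hstep
      set dx := X (n + 1) - X n with hdx
      set dy := Y (n + 1) - Y n with hdy
      set a := Z t n with ha
      set b := Z t' n with hb
      rcases hstep with hs | hs
      · -- step (1, -1)
        simp only [Set.mem_singleton_iff, Prod.mk.injEq] at hs
        obtain ⟨hx1, hy1⟩ := hs
        rw [hx1, hy1] at hrt hrt'
        rcases le_or_gt 0 a with hA | hA <;> rcases le_or_gt 0 b with hB | hB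
        · rw [hrt.1 hA, hrt'.1 hB]; linarith
        · rw [hrt.1 hA, hrt'.2.1 hB (by linarith)]; linarith
        · linarith
        · rw [hrt.2.1 hA (by linarith), hrt'.2.1 hB (by linarith)]; linarith
      · -- step with dx ≤ 0 ≤ dy
        obtain ⟨hx0, hy0⟩ := hs
        simp only at hx0 hy0
        rcases le_or_gt 0 a with hA | hA <;> rcases le_or_gt 0 b with hB | hB
        · rw [hrt.1 hA, hrt'.1 hB]; linarith
        · rcases lt_or_ge (b - dx) 0 with hB' | hB'
          · rw [hrt.1 hA, hrt'.2.1 hB hB']; linarith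
          · rw [hrt.1 hA, hrt'.2.2 hB hB']; linarith
        · linarith
        · rcases lt_or_ge (a - dx) 0 with hA' | hA'
          · rw [hrt.2.1 hA hA', hrt'.2.1 hB (by linarith)]; linarith
          · rcases lt_or_ge (b - dx) 0 with hB' | hB'
            · rw [hrt.2.2 hA hA', hrt'.2.1 hB hB']; linarith
            · rw [hrt.2.2 hA hA', hrt'.2.2 hB hB']
  intro k' hk'I hkk'
  exact key k' hkk' hk'I
end

section
/- Given a coalescent-walk process Z = {Z^{(t)}}_{t∈I} over an interval I of ℤ, the relation i ≤_Z j defined by: i ≤_Z j iff (i < j and Z^{(i)}_j < 0) or (j < i and Z^{(j)}_i ≥ 0) or (i = j), is a total order on I. -/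
/-- The order relation associated with a coalescent-walk process Z:
i ≤_Z j iff (i < j and Z i j < 0) or (j < i and Z j i ≥ 0) or i = j. -/
def coalOrder (Z : ℤ → ℤ → ℤ) (i j : ℤ) : Prop :=
  (i < j ∧ Z i j < 0) ∨ (j < i ∧ 0 ≤ Z j i) ∨ i = j

/-- For a coalescent-walk process Z over an interval I of ℤ, the relation ≤_Z is a
total order on I: reflexive, antisymmetric, transitive and total. -/
theorem coalOrder_isTotalOrder
    (I : Set ℤ) (hI : I.OrdConnected) (Z : ℤ → ℤ → ℤ)
    (hstart : ∀ t ∈ I, Z t t = 0)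
    (hmono : ∀ t ∈ I, ∀ t' ∈ I, ∀ k ∈ I, max t t' ≤ k → Z t' k ≤ Z t k →
      ∀ k' ∈ I, k ≤ k' → Z t' k' ≤ Z t k') :
    (∀ i ∈ I, coalOrder Z i i) ∧
    (∀ i ∈ I, ∀ j ∈ I, coalOrder Z i j → coalOrder Z j i → i = j) ∧
    (∀ i ∈ I, ∀ j ∈ I, ∀ k ∈ I, coalOrder Z i j → coalOrder Z j k → coalOrder Z i k) ∧
    (∀ i ∈ I, ∀ j ∈ I, coalOrder Z i j ∨ coalOrder Z j i) := by
  refine ⟨fun i _ => Or.inr (Or.inr rfl), ?_, ?_, ?_⟩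
  · rintro i hi j hj (⟨h1, h2⟩ | ⟨h1, h2⟩ | h1) (⟨g1, g2⟩ | ⟨g1, g2⟩ | g1) <;> omega
  · rintro i hi j hj k hk (⟨h1, h2⟩ | ⟨h1, h2⟩ | h1) (⟨g1, g2⟩ | ⟨g1, g2⟩ | g1)
    · -- i < j, Z i j < 0 ; j < k, Z j k < 0
      refine Or.inl ⟨by omega, ?_⟩
      have := hmono j hj i hi j hj (by omega) (by rw [hstart j hj]; omega) k hk (by omega)
      omega
    · -- i < j, Z i j < 0 ; k < j, 0 ≤ Z k j : j largest
      rcases lt_trichotomy i k with hik | hik | hik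
      · -- i < k < j : want Z i k < 0
        refine Or.inl ⟨hik, ?_⟩
        by_contra hc
        have := hmono i hi k hk k hk (by omega) (by rw [hstart k hk]; omega) j hj (by omega)
        omega
      · exact Or.inr (Or.inr hik)
      · -- k < i < j : want 0 ≤ Z k i
        refine Or.inr (Or.inl ⟨hik, ?_⟩)
        by_contra hc
        have := hmono i hi k hk i hi (by omega) (by rw [hstart i hi]; omega) j hj (by omega)
        omega
    · subst g1; exact Or.inl ⟨h1, h2⟩
    · -- j < i, 0 ≤ Z j i ; j < k, Z j k < 0 : j smallest
      rcases lt_trichotomy i k with hik | hik | hik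
      · -- i < k : want Z i k < 0
        refine Or.inl ⟨hik, ?_⟩
        have := hmono j hj i hi i hi (by omega) (by rw [hstart i hi]; omega) k hk (by omega)
        omega
      · exact Or.inr (Or.inr hik)
      · -- k < i : want 0 ≤ Z k i
        refine Or.inr (Or.inl ⟨hik, ?_⟩)
        have := hmono k hk j hj k hk (by omega) (by rw [hstart k hk]; omega) i hi (by omega)
        omega
    · -- j < i, 0 ≤ Z j i ; k < j, 0 ≤ Z k j : k < j < i
      refine Or.inr (Or.inl ⟨by omega, ?_⟩)
      have := hmono k hk j hj j hj (by omega) (by rw [hstart j hj]; omega) i hi (by omega)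
      omega
    · subst g1; exact Or.inr (Or.inl ⟨h1, h2⟩)
    · subst h1; exact Or.inl ⟨g1, g2⟩
    · subst h1; exact Or.inr (Or.inl ⟨g1, g2⟩)
    · subst h1; exact Or.inr (Or.inr g1)
  · rintro i hi j hj
    rcases lt_trichotomy i j with h | h | h
    · rcases lt_or_ge (Z i j) 0 with h2 | h2
      · exact Or.inl (Or.inl ⟨h, h2⟩)
      · exact Or.inr (Or.inr (Or.inl ⟨h, h2⟩))
    · exact Or.inl (Or.inr (Or.inr h))
    · rcases lt_or_ge (Z j i) 0 with h2 | h2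
      · exact Or.inr (Or.inl ⟨h, h2⟩)
      · exact Or.inl (Or.inr (Or.inl ⟨h, h2⟩))
end

section
/- In the coalescent-walk process Z associated with a plane walk with increments in A, the y-coordinates of coalescent points are non-negative: if t < t' and ℓ = min{k ≥ t' : Z^{(t)}_k = Z^{(t')}_k} exists, then Z^{(t)}_ℓ ≥ 0. -/
/-- In the coalescent-walk process associated with a plane walk with increments in A,
the y-coordinates of coalescent points are non-negative: if t < t' and ℓ is the first
time ≥ t' at which the trajectories started at t and t' meet, then their common value
at time ℓ is ≥ 0. -/
theorem coalescent_point_nonneg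
    (I : Set ℤ) (hI : I.OrdConnected) (X Y : ℤ → ℤ)
    (hinc : ∀ k ∈ I, (k - 1) ∈ I → (X k - X (k - 1), Y k - Y (k - 1)) ∈ AdmissibleSteps)
    (Z : ℤ → ℤ → ℤ)
    (hstart : ∀ t ∈ I, Z t t = 0)
    (hrec : ∀ t ∈ I, ∀ k ∈ I, t < k →
      (0 ≤ Z t (k - 1) → Z t k = Z t (k - 1) + (Y k - Y (k - 1))) ∧
      (Z t (k - 1) < 0 → Z t (k - 1) - (X k - X (k - 1)) < 0 →
        Z t k = Z t (k - 1) - (X k - X (k - 1))) ∧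
      (Z t (k - 1) < 0 → 0 ≤ Z t (k - 1) - (X k - X (k - 1)) →
        Z t k = Y k - Y (k - 1)))
    (t : ℤ) (ht : t ∈ I) (t' : ℤ) (ht' : t' ∈ I) (htt' : t < t')
    (ℓ : ℤ) (hℓ : ℓ ∈ I) (hℓt' : t' ≤ ℓ)
    (hmeet : Z t ℓ = Z t' ℓ)
    (hfirst : ∀ k, t' ≤ k → k < ℓ → Z t k ≠ Z t' k) :
    0 ≤ Z t ℓ := by
  rcases eq_or_lt_of_le hℓt' with h | h
  · rw [hmeet, ← h, hstart t' ht']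
  · have hm1 : ℓ - 1 ∈ I := hI.out ht' hℓ (Set.mem_Icc.mpr ⟨by omega, by omega⟩)
    have hs := hinc ℓ hℓ hm1
    simp only [AdmissibleSteps, Set.mem_union, Set.mem_singleton_iff, Set.mem_setOf_eq,
      Prod.mk.injEq] at hs
    obtain ⟨h1, h2, h3⟩ := hrec t ht ℓ hℓ (by omega)
    obtain ⟨h1', h2', h3'⟩ := hrec t' ht' ℓ hℓ h
    have hne := hfirst (ℓ - 1) (by omega) (by omega)
    set a := X ℓ - X (ℓ - 1) with ha
    set b := Y ℓ - Y (ℓ - 1) with hb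
    have et : (0 ≤ Z t (ℓ - 1) ∧ Z t ℓ = Z t (ℓ - 1) + b) ∨
        (Z t (ℓ - 1) < 0 ∧ Z t ℓ = Z t (ℓ - 1) - a ∧ Z t ℓ < 0) ∨
        (Z t (ℓ - 1) < 0 ∧ Z t ℓ = b ∧ 0 ≤ Z t (ℓ - 1) - a) := by
      rcases le_or_gt 0 (Z t (ℓ - 1)) with hz | hz
      · exact Or.inl ⟨hz, h1 hz⟩
      · rcases lt_or_ge (Z t (ℓ - 1) - a) 0 with hw | hw
        · exact Or.inr (Or.inl ⟨hz, h2 hz hw, by rw [h2 hz hw]; exact hw⟩)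
        · exact Or.inr (Or.inr ⟨hz, h3 hz hw, hw⟩)
    have et' : (0 ≤ Z t' (ℓ - 1) ∧ Z t' ℓ = Z t' (ℓ - 1) + b) ∨
        (Z t' (ℓ - 1) < 0 ∧ Z t' ℓ = Z t' (ℓ - 1) - a ∧ Z t' ℓ < 0) ∨
        (Z t' (ℓ - 1) < 0 ∧ Z t' ℓ = b ∧ 0 ≤ Z t' (ℓ - 1) - a) := by
      rcases le_or_gt 0 (Z t' (ℓ - 1)) with hz | hz
      · exact Or.inl ⟨hz, h1' hz⟩
      · rcases lt_or_ge (Z t' (ℓ - 1) - a) 0 with hw | hw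
        · exact Or.inr (Or.inl ⟨hz, h2' hz hw, by rw [h2' hz hw]; exact hw⟩)
        · exact Or.inr (Or.inr ⟨hz, h3' hz hw, hw⟩)
    omega
end

section
/- Let (X,Y) be distributed according to ν. Then the covariance of X and Y equals -1, so (since Var(X) = Var(Y) = 2) the correlation of X and Y is -1/2. -/
lemma geo_sum : ∑' n : ℕ, (n : ℝ) * (1/2)^n = 2 := by
  have h := tsum_coe_mul_geometric_of_norm_lt_one (r := (1/2 : ℝ)) (by norm_num [abs_of_pos])
  rw [h]; norm_num

lemma geo_summable : Summable (fun n : ℕ => (n : ℝ) * (1/2)^n) := by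
  have := summable_pow_mul_geometric_of_norm_lt_one (R := ℝ) 1 (r := 1/2) (by norm_num [abs_of_pos])
  exact this.congr (fun n => by simp)

lemma term_eq (i j : ℕ) :
    (2 : ℝ) ^ (-(i : ℤ) - (j : ℤ) - 3) * ((-(i : ℝ)) * (j : ℝ))
      = (-(1/8) * ((i : ℝ) * (1/2)^i)) * ((j : ℝ) * (1/2)^j) := by
  have : (2 : ℝ) ^ (-(i : ℤ) - (j : ℤ) - 3)
      = (1/2 : ℝ)^i * (1/2)^j * (1/8) := by
    rw [show (-(i:ℤ) - j - 3) = (-(i:ℤ)) + (-(j:ℤ)) + (-3) by ring,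
      zpow_add₀ (by norm_num : (2:ℝ) ≠ 0), zpow_add₀ (by norm_num : (2:ℝ) ≠ 0)]
    rw [zpow_neg, zpow_neg, zpow_natCast, zpow_natCast]
    norm_num [div_pow]
  rw [this]; ring

/-- For (X,Y) distributed according to ν (mass 1/2 at (1,-1), mass 2^{-i-j-3} at (-i,j)),
since E[X] = E[Y] = 0, the covariance of X and Y is E[XY] = -1; and since
Var(X) = Var(Y) = 2, the correlation is -1/(√2·√2) = -1/2. -/
theorem nu_covariance :
    (1 / 2 : ℝ) * (1 * (-1)) +
      ∑' p : ℕ × ℕ, (2 : ℝ) ^ (-(p.1 : ℤ) - (p.2 : ℤ) - 3) * ((-(p.1 : ℝ)) * (p.2 : ℝ))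
      = -1 ∧
    (-1 : ℝ) / (Real.sqrt 2 * Real.sqrt 2) = -1 / 2 := by
  constructor
  · have hsum : (∑' p : ℕ × ℕ, (2 : ℝ) ^ (-(p.1 : ℤ) - (p.2 : ℤ) - 3) * ((-(p.1 : ℝ)) * (p.2 : ℝ)))
        = -1/2 := by
      calc ∑' p : ℕ × ℕ, (2 : ℝ) ^ (-(p.1 : ℤ) - (p.2 : ℤ) - 3) * ((-(p.1 : ℝ)) * (p.2 : ℝ))
          = ∑' p : ℕ × ℕ, (-(1/8) * ((p.1 : ℝ) * (1/2)^p.1)) * ((p.2 : ℝ) * (1/2)^p.2) := by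
            exact tsum_congr fun p => term_eq p.1 p.2
        _ = (∑' i : ℕ, -(1/8) * ((i : ℝ) * (1/2)^i)) * ∑' j : ℕ, (j : ℝ) * (1/2)^j := by
            have h1 : Summable fun n : ℕ => ‖-(1/8:ℝ) * ((n:ℝ)*(1/2)^n)‖ :=
              (geo_summable.mul_left (1/8)).congr fun n => by
                rw [Real.norm_eq_abs, abs_mul, abs_mul, abs_pow]
                norm_num [abs_of_nonneg]
            have h2 : Summable fun n : ℕ => ‖(n:ℝ)*(1/2)^n‖ :=
              geo_summable.congr fun n => by
                rw [Real.norm_eq_abs, abs_mul, abs_pow]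
                norm_num [abs_of_nonneg]
            exact (tsum_mul_tsum_of_summable_norm h1 h2).symm
        _ = -1/2 := by
            rw [tsum_mul_left, geo_sum]; norm_num
    rw [hsum]; norm_num
  · rw [Real.mul_self_sqrt (by norm_num)]
end

section
/- Let W̄ = (Z_k)_{k≥0} be the coalescent-walk trajectory Z^{(0)} associated (via the recursion of Φ_WC) with an i.i.d. random walk with step distribution ν. Then each increment Z_k - Z_{k-1} has the same distribution as the second marginal of ν (ℙ = 1/2 at -1, and 2^{-j-2} at j for j ≥ 0), conditionally on the past; in particular Z^{(0)} is a random walk with this step distribution. -/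
open MeasureTheory

/-- The step distribution ν on ℤ²: mass 1/2 at (1,-1) and mass 2^{-i-j-3} at (-i,j). -/
noncomputable def nuStep : Measure (ℤ × ℤ) :=
  (2⁻¹ : ENNReal) • Measure.dirac ((1, -1) : ℤ × ℤ) +
    Measure.sum (fun p : ℕ × ℕ =>
      ((2⁻¹ : ENNReal) ^ (p.1 + p.2 + 3)) • Measure.dirac ((-(p.1 : ℤ), (p.2 : ℤ)) : ℤ × ℤ))

/-- The second-coordinate marginal of ν: probability 1/2 at -1 and 2^{-j-2} at j ≥ 0. -/
noncomputable def stepProb (j : ℤ) : ENNReal :=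
  if j = -1 then 2⁻¹ else if 0 ≤ j then (2⁻¹ : ENNReal) ^ (j.toNat + 2) else 0

lemma nuStep_apply (s : Set (ℤ × ℤ)) :
    nuStep s = 2⁻¹ * s.indicator 1 ((1 : ℤ), (-1 : ℤ))
      + ∑' p : ℕ × ℕ,
          (2⁻¹ : ENNReal) ^ (p.1 + p.2 + 3) * s.indicator 1 ((-(p.1 : ℤ), (p.2 : ℤ))) := by
  have hs : MeasurableSet s := .of_discrete
  rw [nuStep, Measure.add_apply, Measure.smul_apply, Measure.sum_apply _ hs,
    Measure.dirac_apply' _ hs]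
  congr 1
  refine tsum_congr fun p => ?_
  rw [Measure.smul_apply, Measure.dirac_apply' _ hs, smul_eq_mul]

lemma tsum_geom_half : (∑' i : ℕ, (2⁻¹ : ENNReal) ^ i) = 2 := by
  rw [ENNReal.tsum_geometric, ENNReal.one_sub_inv_two, inv_inv]

lemma geom_shift (a c : ℕ) :
    (∑' i : ℕ, (if a ≤ i then (2⁻¹ : ENNReal) ^ (i + c) else 0)) = 2⁻¹ ^ (a + c) * 2 := by
  induction a with
  | zero =>
    simp only [Nat.zero_le, if_true, zero_add]
    calc (∑' i : ℕ, (2⁻¹ : ENNReal) ^ (i + c))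
        = ∑' i : ℕ, (2⁻¹ : ENNReal) ^ i * 2⁻¹ ^ c := by
          refine tsum_congr fun i => ?_; rw [pow_add]
      _ = 2⁻¹ ^ c * 2 := by rw [ENNReal.tsum_mul_right, tsum_geom_half, mul_comm]
  | succ a ih =>
    have hsplit := Summable.tsum_eq_add_tsum_ite'
      (f := fun i : ℕ => (if a ≤ i then (2⁻¹ : ENNReal) ^ (i + c) else 0)) a ENNReal.summable
    have hrw : (∑' i : ℕ, if i = a then 0 else (if a ≤ i then (2⁻¹ : ENNReal) ^ (i + c) else 0))
        = ∑' i : ℕ, (if a + 1 ≤ i then (2⁻¹ : ENNReal) ^ (i + c) else 0) := by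
      refine tsum_congr fun i => ?_
      by_cases h1 : i = a
      · subst h1; simp
      · by_cases h2 : a ≤ i
        · rw [if_neg h1, if_pos h2, if_pos (by omega)]
        · rw [if_neg h1, if_neg h2, if_neg (by omega)]
    rw [hsplit] at ih
    beta_reduce at ih
    rw [if_pos le_rfl, hrw] at ih
    have hne : (2⁻¹ : ENNReal) ^ (a + c) ≠ ⊤ := ENNReal.pow_ne_top (by simp)
    rw [show (2⁻¹ : ENNReal) ^ (a + c) * 2 = 2⁻¹ ^ (a + c) + 2⁻¹ ^ (a + c) from mul_two _] at ih
    have hval := (ENNReal.add_right_inj hne).mp ih.symm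
    rw [← hval, show a + 1 + c = (a + c) + 1 by omega, pow_succ, mul_assoc,
      ENNReal.inv_mul_cancel (by norm_num) (by norm_num), mul_one]


/-- The one-step update function for the coalescent walk increment. -/
def stepFun (m : ℤ) (p : ℤ × ℤ) : ℤ :=
  if 0 ≤ m then p.2 else if m - p.1 < 0 then -p.1 else p.2 - m

lemma stepFun_one_negone (m : ℤ) : stepFun m ((1 : ℤ), (-1 : ℤ)) = -1 := by
  unfold stepFun
  split_ifs with h1 h2 <;> simp <;> omega

lemma stepFun_neg_coe (m : ℤ) (hm : m < 0) (i j2 : ℕ) :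
    stepFun m (-(i : ℤ), (j2 : ℤ)) = if m + i < 0 then (i : ℤ) else (j2 : ℤ) - m := by
  unfold stepFun
  rw [if_neg (not_le.mpr hm)]
  simp only [sub_neg_eq_add, neg_neg]

lemma tsum_pow_add (c : ℕ) : (∑' j : ℕ, (2⁻¹ : ENNReal) ^ (j + c)) = 2⁻¹ ^ c * 2 := by
  calc (∑' j : ℕ, (2⁻¹ : ENNReal) ^ (j + c))
      = ∑' j : ℕ, (2⁻¹ : ENNReal) ^ j * 2⁻¹ ^ c := tsum_congr fun j => by rw [pow_add]
    _ = 2⁻¹ ^ c * 2 := by rw [ENNReal.tsum_mul_right, tsum_geom_half, mul_comm]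

lemma two_mul_inv_two : (2 : ENNReal) * 2⁻¹ = 1 := ENNReal.mul_inv_cancel (by norm_num) (by norm_num)

lemma nuStep_univ : nuStep Set.univ = 1 := by
  rw [nuStep_apply]
  have h2 : (∑' p : ℕ × ℕ, (2⁻¹ : ENNReal) ^ (p.1 + p.2 + 3)
      * (Set.univ : Set (ℤ × ℤ)).indicator 1 ((-(p.1 : ℤ), (p.2 : ℤ)))) = 2⁻¹ := by
    calc (∑' p : ℕ × ℕ, (2⁻¹ : ENNReal) ^ (p.1 + p.2 + 3)
        * (Set.univ : Set (ℤ × ℤ)).indicator 1 ((-(p.1 : ℤ), (p.2 : ℤ))))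
        = ∑' i : ℕ, ∑' j : ℕ, (2⁻¹ : ENNReal) ^ (j + (i + 3)) := by
          rw [ENNReal.tsum_prod']
          refine tsum_congr fun i => tsum_congr fun j => ?_
          rw [Set.indicator_of_mem (Set.mem_univ _), Pi.one_apply, mul_one]
          congr 1
          omega
      _ = ∑' i : ℕ, (2⁻¹ : ENNReal) ^ (i + 3) * 2 := tsum_congr fun i => by
          rw [tsum_pow_add]
      _ = (2⁻¹ : ENNReal) ^ 3 * 2 * 2 := by rw [ENNReal.tsum_mul_right, tsum_pow_add]
      _ = 2⁻¹ := by
          rw [show ((2:ENNReal)⁻¹) ^ 3 * 2 * 2 = 2⁻¹ * ((2 * 2⁻¹) * (2 * 2⁻¹)) by ring,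
            two_mul_inv_two, mul_one, mul_one]
  rw [h2, Set.indicator_of_mem (Set.mem_univ _), Pi.one_apply, mul_one]
  exact ENNReal.inv_two_add_inv_two

lemma measure_eq_tsum_singleton {β : Type*} [MeasurableSpace β] [MeasurableSingletonClass β]
    [Countable β] (μ : Measure β) (s : Set β) : μ s = ∑' b : s, μ {(b : β)} := by
  conv_lhs => rw [← Set.iUnion_of_singleton_coe s]
  rw [measure_iUnion (fun x y hxy => by
        simp only [Set.disjoint_singleton]
        exact fun h => hxy (Subtype.ext h))
      (fun b => measurableSet_singleton _)]

lemma measure_eq_tsum_indicator {β : Type*} [MeasurableSpace β] [MeasurableSingletonClass β]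
    [Countable β] (μ : Measure β) (s : Set β) :
    μ s = ∑' b : β, s.indicator (fun b => μ {b}) b := by
  rw [measure_eq_tsum_singleton, ← tsum_subtype s (fun b => μ {b})]

lemma pow_succ_mul_two (n : ℕ) : (2⁻¹ : ENNReal) ^ (n + 1) * 2 = 2⁻¹ ^ n := by
  rw [pow_succ, mul_assoc, ENNReal.inv_mul_cancel (by norm_num) (by norm_num), mul_one]

lemma nuStep_stepFun (m j : ℤ) : nuStep {p | stepFun m p = j} = stepProb j := by
  rw [nuStep_apply]
  have hT1 : 2⁻¹ * Set.indicator {p | stepFun m p = j} 1 ((1 : ℤ), (-1 : ℤ))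
      = if j = -1 then (2⁻¹ : ENNReal) else 0 := by
    by_cases hj : j = -1
    · rw [if_pos hj, Set.indicator_of_mem
        (by simp only [Set.mem_setOf_eq, stepFun_one_negone]; omega), Pi.one_apply, mul_one]
    · rw [if_neg hj, Set.indicator_of_notMem
        (by simp only [Set.mem_setOf_eq, stepFun_one_negone]; omega), mul_zero]
  rw [hT1]
  rcases lt_or_ge m 0 with hm | hm
  · by_cases hj : 0 ≤ j
    · have hjne : ¬ j = -1 := by omega
      rw [if_neg hjne, zero_add]
      by_cases hmj : m + j < 0
      · have hA : (∑' p : ℕ × ℕ, (2⁻¹ : ENNReal) ^ (p.1 + p.2 + 3)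
            * Set.indicator {p | stepFun m p = j} 1 ((-(p.1 : ℤ), (p.2 : ℤ))))
            = ∑' i : ℕ, ∑' j2 : ℕ,
              (if i = j.toNat then (2⁻¹ : ENNReal) ^ (j2 + (i + 3)) else 0) := by
          rw [ENNReal.tsum_prod']
          refine tsum_congr fun i => tsum_congr fun j2 => ?_
          by_cases hi : i = j.toNat
          · rw [if_pos hi, Set.indicator_of_mem
              (by simp only [Set.mem_setOf_eq, stepFun_neg_coe m hm]
                  rw [if_pos (by omega)]; omega),
              Pi.one_apply, mul_one]
            congr 1
            omega
          · rw [if_neg hi, Set.indicator_of_notMem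
              (by simp only [Set.mem_setOf_eq, stepFun_neg_coe m hm]
                  split_ifs <;> omega), mul_zero]
        rw [hA, tsum_eq_single j.toNat (fun b hb => by
          refine ENNReal.tsum_eq_zero.mpr fun j2 => if_neg hb)]
        calc (∑' j2 : ℕ, if j.toNat = j.toNat then (2⁻¹ : ENNReal) ^ (j2 + (j.toNat + 3)) else 0)
            = ∑' j2 : ℕ, (2⁻¹ : ENNReal) ^ (j2 + (j.toNat + 3)) := by
              refine tsum_congr fun j2 => if_pos rfl
          _ = stepProb j := by
              rw [tsum_pow_add, show j.toNat + 3 = (j.toNat + 2) + 1 by omega,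
                pow_succ_mul_two, stepProb, if_neg hjne, if_pos hj]
      · have hA : (∑' p : ℕ × ℕ, (2⁻¹ : ENNReal) ^ (p.1 + p.2 + 3)
            * Set.indicator {p | stepFun m p = j} 1 ((-(p.1 : ℤ), (p.2 : ℤ))))
            = ∑' i : ℕ, (if (-m).toNat ≤ i then
                (2⁻¹ : ENNReal) ^ (i + ((j + m).toNat + 3)) else 0) := by
          rw [ENNReal.tsum_prod']
          refine tsum_congr fun i => ?_
          by_cases hi : (-m).toNat ≤ i
          · rw [if_pos hi, tsum_eq_single (j + m).toNat (fun b hb => by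
              rw [Set.indicator_of_notMem
                (by simp only [Set.mem_setOf_eq, stepFun_neg_coe m hm]
                    rw [if_neg (by omega)]; omega), mul_zero])]
            rw [Set.indicator_of_mem
              (by simp only [Set.mem_setOf_eq, stepFun_neg_coe m hm]
                  rw [if_neg (by omega)]; omega), Pi.one_apply, mul_one]
            congr 1
          · rw [if_neg hi]
            refine ENNReal.tsum_eq_zero.mpr fun j2 => ?_
            rw [Set.indicator_of_notMem
              (by simp only [Set.mem_setOf_eq, stepFun_neg_coe m hm]
                  rw [if_pos (by omega)]; omega), mul_zero]
        rw [hA, geom_shift,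
          show (-m).toNat + ((j + m).toNat + 3) = (j.toNat + 2) + 1 by omega,
          pow_succ_mul_two, stepProb, if_neg hjne, if_pos hj]
    · have hA : (∑' p : ℕ × ℕ, (2⁻¹ : ENNReal) ^ (p.1 + p.2 + 3)
          * Set.indicator {p | stepFun m p = j} 1 ((-(p.1 : ℤ), (p.2 : ℤ)))) = 0 := by
        refine ENNReal.tsum_eq_zero.mpr fun p => ?_
        rw [Set.indicator_of_notMem
          (by simp only [Set.mem_setOf_eq, stepFun_neg_coe m hm]
              split_ifs <;> omega), mul_zero]
      rw [hA, add_zero, stepProb]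
      by_cases hj1 : j = -1
      · rw [if_pos hj1, if_pos hj1]
      · rw [if_neg hj1, if_neg hj1, if_neg hj]
  · -- 0 ≤ m : stepFun m p = p.2
    have hstep : ∀ p : ℤ × ℤ, stepFun m p = p.2 := fun p => if_pos hm
    by_cases hj : 0 ≤ j
    · have hjne : ¬ j = -1 := by omega
      rw [if_neg hjne, zero_add]
      have hA : (∑' p : ℕ × ℕ, (2⁻¹ : ENNReal) ^ (p.1 + p.2 + 3)
          * Set.indicator {p | stepFun m p = j} 1 ((-(p.1 : ℤ), (p.2 : ℤ))))
          = ∑' i : ℕ, ∑' j2 : ℕ,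
            (if j2 = j.toNat then (2⁻¹ : ENNReal) ^ (i + (j.toNat + 3)) else 0) := by
        rw [ENNReal.tsum_prod']
        refine tsum_congr fun i => tsum_congr fun j2 => ?_
        by_cases hj2 : j2 = j.toNat
        · rw [if_pos hj2, Set.indicator_of_mem
            (by simp only [Set.mem_setOf_eq, hstep]; omega), Pi.one_apply, mul_one]
          congr 1
          omega
        · rw [if_neg hj2, Set.indicator_of_notMem
            (by simp only [Set.mem_setOf_eq, hstep]; omega), mul_zero]
      rw [hA]
      calc (∑' i : ℕ, ∑' j2 : ℕ,
            (if j2 = j.toNat then (2⁻¹ : ENNReal) ^ (i + (j.toNat + 3)) else 0))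
          = ∑' i : ℕ, (2⁻¹ : ENNReal) ^ (i + (j.toNat + 3)) := by
            refine tsum_congr fun i => ?_
            rw [tsum_eq_single j.toNat (fun b hb => if_neg hb), if_pos rfl]
        _ = stepProb j := by
            rw [tsum_pow_add, show j.toNat + 3 = (j.toNat + 2) + 1 by omega,
              pow_succ_mul_two, stepProb, if_neg hjne, if_pos hj]
    · have hA : (∑' p : ℕ × ℕ, (2⁻¹ : ENNReal) ^ (p.1 + p.2 + 3)
          * Set.indicator {p | stepFun m p = j} 1 ((-(p.1 : ℤ), (p.2 : ℤ)))) = 0 := by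
        refine ENNReal.tsum_eq_zero.mpr fun p => ?_
        rw [Set.indicator_of_notMem
          (by simp only [Set.mem_setOf_eq, hstep]; omega), mul_zero]
      rw [hA, add_zero, stepProb]
      by_cases hj1 : j = -1
      · rw [if_pos hj1, if_pos hj1]
      · rw [if_neg hj1, if_neg hj1, if_neg hj]

section Walk

variable {Ω : Type*} [MeasurableSpace Ω]

/-- Mass of a single history of the walk up to time `n`. -/
noncomputable def wt (ℙ : Measure Ω) (W : ℕ → Ω → ℤ × ℤ) (n : ℕ)
    (u : Fin (n + 1) → ℤ × ℤ) : ENNReal :=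
  ℙ ((fun ω => fun i : Fin (n + 1) => W i ω) ⁻¹' {u})

lemma slice_lemma (ℙ : Measure Ω) [IsProbabilityMeasure ℙ] (W : ℕ → Ω → ℤ × ℤ) (n : ℕ)
    (hWstep : ∀ B : Set Ω,
      MeasurableSet[MeasurableSpace.comap (fun ω => fun i : Fin (n + 1) => W i ω)
        inferInstance] B →
      ∀ s : Set (ℤ × ℤ),
        ℙ (B ∩ {ω | W (n + 1) ω - W n ω ∈ s}) = ℙ B * nuStep s)
    (hP : ∀ S : Set (Fin (n + 1) → ℤ × ℤ),
      ℙ ((fun ω => fun i : Fin (n + 1) => W i ω) ⁻¹' S) = ∑' u, S.indicator (wt ℙ W n) u)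
    (s : (Fin (n + 1) → ℤ × ℤ) → Set (ℤ × ℤ)) :
    ℙ (⋃ u, ((fun ω => fun i : Fin (n + 1) => W i ω) ⁻¹' {u}
        ∩ {ω | W (n + 1) ω - W n ω ∈ s u}))
      = ∑' u, wt ℙ W n u * nuStep (s u) := by
  have hmeas : ∀ u : Fin (n + 1) → ℤ × ℤ,
      MeasurableSet[MeasurableSpace.comap (fun ω => fun i : Fin (n + 1) => W i ω)
        inferInstance] ((fun ω => fun i : Fin (n + 1) => W i ω) ⁻¹' {u}) :=
    fun u => ⟨{u}, .of_discrete, rfl⟩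
  have hle : ∀ t : (Fin (n + 1) → ℤ × ℤ) → Set (ℤ × ℤ),
      ℙ (⋃ u, ((fun ω => fun i : Fin (n + 1) => W i ω) ⁻¹' {u}
        ∩ {ω | W (n + 1) ω - W n ω ∈ t u})) ≤ ∑' u, wt ℙ W n u * nuStep (t u) := by
    intro t
    refine (measure_iUnion_le _).trans_eq (tsum_congr fun u => ?_)
    exact hWstep _ (hmeas u) (t u)
  have hsum1 : (∑' u, wt ℙ W n u) = 1 := by
    have h := hP Set.univ
    rw [Set.preimage_univ, measure_univ, Set.indicator_univ] at h
    exact h.symm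
  have hQR : (∑' u, wt ℙ W n u * nuStep (s u))
      + (∑' u, wt ℙ W n u * nuStep ((s u)ᶜ)) = 1 := by
    rw [← ENNReal.tsum_add, ← hsum1]
    refine tsum_congr fun u => ?_
    rw [← mul_add, measure_add_measure_compl .of_discrete, nuStep_univ, mul_one]
  have hcompl : (⋃ u, ((fun ω => fun i : Fin (n + 1) => W i ω) ⁻¹' {u}
        ∩ {ω | W (n + 1) ω - W n ω ∈ s u}))ᶜ
      = ⋃ u, ((fun ω => fun i : Fin (n + 1) => W i ω) ⁻¹' {u}
        ∩ {ω | W (n + 1) ω - W n ω ∈ (s u)ᶜ}) := by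
    ext ω
    simp only [Set.mem_compl_iff, Set.mem_iUnion, Set.mem_inter_iff, Set.mem_preimage,
      Set.mem_singleton_iff, Set.mem_setOf_eq]
    constructor
    · intro h
      exact ⟨_, rfl, fun hc => h ⟨_, rfl, hc⟩⟩
    · rintro ⟨u, rfl, hc⟩ ⟨u', h', hc'⟩
      rw [← h'] at hc'
      exact hc hc'
  have htot : (1 : ENNReal) ≤ ℙ (⋃ u, ((fun ω => fun i : Fin (n + 1) => W i ω) ⁻¹' {u}
        ∩ {ω | W (n + 1) ω - W n ω ∈ s u}))
      + ℙ ((⋃ u, ((fun ω => fun i : Fin (n + 1) => W i ω) ⁻¹' {u}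
        ∩ {ω | W (n + 1) ω - W n ω ∈ s u}))ᶜ) := by
    calc (1 : ENNReal) = ℙ Set.univ := measure_univ.symm
      _ = ℙ (_ ∪ _ᶜ) := by rw [Set.union_compl_self]
      _ ≤ _ + _ := measure_union_le _ _
  have hR_le : (∑' u, wt ℙ W n u * nuStep ((s u)ᶜ)) ≤ 1 := le_add_self.trans_eq hQR
  have hQ_eq : (∑' u, wt ℙ W n u * nuStep (s u))
      = 1 - (∑' u, wt ℙ W n u * nuStep ((s u)ᶜ)) :=
    ENNReal.eq_sub_of_add_eq (ne_top_of_le_ne_top ENNReal.one_ne_top hR_le) hQR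
  refine le_antisymm (hle s) ?_
  rw [hQ_eq]
  refine tsub_le_iff_right.mpr (htot.trans ?_)
  refine add_le_add_right ?_ _
  rw [hcompl]
  exact hle _

lemma key_lemma (ℙ : Measure Ω) [IsProbabilityMeasure ℙ] (W : ℕ → Ω → ℤ × ℤ)
    (hW0 : ∀ ω, W 0 ω = (0, 0))
    (hWstep : ∀ k : ℕ, ∀ B : Set Ω,
      MeasurableSet[MeasurableSpace.comap (fun ω => fun i : Fin (k + 1) => W i ω)
        inferInstance] B →
      ∀ s : Set (ℤ × ℤ),
        ℙ (B ∩ {ω | W (k + 1) ω - W k ω ∈ s}) = ℙ B * nuStep s) :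
    ∀ n : ℕ, ∀ S : Set (Fin (n + 1) → ℤ × ℤ),
      ℙ ((fun ω => fun i : Fin (n + 1) => W i ω) ⁻¹' S) = ∑' u, S.indicator (wt ℙ W n) u := by
  classical
  intro n
  induction n with
  | zero =>
    intro S
    have hconst : (fun ω => fun i : Fin 1 => W i ω)
        = fun _ : Ω => (fun _ : Fin 1 => ((0, 0) : ℤ × ℤ)) := by
      funext ω i
      have hi : (i : ℕ) = 0 := by omega
      rw [hi, hW0]
    have hwt : ∀ u, wt ℙ W 0 u
        = if u = (fun _ : Fin 1 => ((0, 0) : ℤ × ℤ)) then 1 else 0 := by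
      intro u
      unfold wt
      rw [hconst]
      by_cases h : u = (fun _ : Fin 1 => ((0, 0) : ℤ × ℤ))
      · rw [if_pos h, Set.preimage_const_of_mem (by rw [h]; exact rfl), measure_univ]
      · rw [if_neg h, Set.preimage_const_of_notMem
          (by simp only [Set.mem_singleton_iff]; exact fun hh => h hh.symm), measure_empty]
    rw [hconst,
      tsum_eq_single (fun _ : Fin 1 => ((0, 0) : ℤ × ℤ)) (fun u hu => by
        rw [Set.indicator_apply]
        split_ifs with hS
        · rw [hwt, if_neg hu]
        · rfl)]
    by_cases hS : (fun _ : Fin 1 => ((0, 0) : ℤ × ℤ)) ∈ S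
    · rw [Set.indicator_of_mem hS, hwt, if_pos rfl, Set.preimage_const_of_mem hS,
        measure_univ]
    · rw [Set.indicator_of_notMem hS, Set.preimage_const_of_notMem hS, measure_empty]
  | succ n ih =>
    intro S
    have hsnoc : ∀ ω, (fun i : Fin (n + 2) => W i ω)
        = Fin.snoc (fun i : Fin (n + 1) => W i ω) (W (n + 1) ω) := by
      intro ω
      funext i
      refine Fin.lastCases ?_ ?_ i
      · rw [Fin.snoc_last, Fin.val_last]
      · intro j
        rw [Fin.snoc_castSucc, Fin.coe_castSucc]
    have hdecomp : ((fun ω => fun i : Fin (n + 2) => W i ω) ⁻¹' S)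
        = ⋃ u, ((fun ω => fun i : Fin (n + 1) => W i ω) ⁻¹' {u}
            ∩ {ω | W (n + 1) ω - W n ω
                ∈ {e | Fin.snoc u (u (Fin.last n) + e) ∈ S}}) := by
      ext ω
      simp only [Set.mem_preimage, Set.mem_iUnion, Set.mem_inter_iff, Set.mem_singleton_iff,
        Set.mem_setOf_eq]
      constructor
      · intro h
        refine ⟨_, rfl, ?_⟩
        show Fin.snoc (fun i : Fin (n + 1) => W i ω)
          (W n ω + (W (n + 1) ω - W n ω)) ∈ S
        rw [show W n ω + (W (n + 1) ω - W n ω) = W (n + 1) ω from by ring, ← hsnoc ω]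
        exact h
      · rintro ⟨u, rfl, hc⟩
        have hc' : Fin.snoc (fun i : Fin (n + 1) => W i ω)
            (W n ω + (W (n + 1) ω - W n ω)) ∈ S := hc
        rw [show W n ω + (W (n + 1) ω - W n ω) = W (n + 1) ω from by ring, ← hsnoc ω] at hc'
        exact hc'
    rw [hdecomp, slice_lemma ℙ W n (hWstep n) ih _]
    have hwt1 : ∀ v : Fin (n + 2) → ℤ × ℤ, wt ℙ W (n + 1) v
        = wt ℙ W n (Fin.init v)
          * nuStep {v (Fin.last (n + 1)) - v (Fin.castSucc (Fin.last n))} := by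
      intro v
      have hset : ((fun ω => fun i : Fin (n + 2) => W i ω) ⁻¹' {v})
          = ((fun ω => fun i : Fin (n + 1) => W i ω) ⁻¹' {Fin.init v}
            ∩ {ω | W (n + 1) ω - W n ω
                ∈ ({v (Fin.last (n + 1)) - v (Fin.castSucc (Fin.last n))} : Set (ℤ × ℤ))}) := by
        ext ω
        simp only [Set.mem_preimage, Set.mem_singleton_iff, Set.mem_inter_iff, Set.mem_setOf_eq]
        rw [hsnoc ω]
        constructor
        · intro h
          refine ⟨by rw [← h, Fin.init_snoc], ?_⟩
          rw [← h, Fin.snoc_last, Fin.snoc_castSucc]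
          rfl
        · rintro ⟨h1, h2⟩
          have hWn : W n ω = v (Fin.castSucc (Fin.last n)) := by
            have := congrFun h1 (Fin.last n)
            exact this
          have hW1 : W (n + 1) ω = v (Fin.last (n + 1)) := by
            have : W (n + 1) ω = (W (n + 1) ω - W n ω) + W n ω := by ring
            rw [this, h2, hWn]
            ring
          rw [h1, hW1, Fin.snoc_init_self]
      unfold wt
      rw [hset]
      exact hWstep n _ ⟨{Fin.init v}, .of_discrete, rfl⟩ _
    -- reshape the tsum on the right-hand side
    have hequiv : ∀ f : (Fin (n + 2) → ℤ × ℤ) → ENNReal,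
        ∑' v, f v = ∑' u : Fin (n + 1) → ℤ × ℤ, ∑' x : ℤ × ℤ, f (Fin.snoc u x) := by
      intro f
      let e : ((Fin (n + 1) → ℤ × ℤ) × (ℤ × ℤ)) ≃ (Fin (n + 2) → ℤ × ℤ) :=
        ⟨fun p => Fin.snoc p.1 p.2, fun v => (Fin.init v, v (Fin.last (n + 1))),
          fun p => by simp [Fin.init_snoc, Fin.snoc_last],
          fun v => by simp [Fin.snoc_init_self]⟩
      rw [← e.tsum_eq f, ENNReal.tsum_prod']
      exact tsum_congr fun a => tsum_congr fun b => rfl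
    rw [hequiv]
    refine tsum_congr fun u => ?_
    calc wt ℙ W n u * nuStep {e | Fin.snoc u (u (Fin.last n) + e) ∈ S}
        = wt ℙ W n u * ∑' e : ℤ × ℤ,
            Set.indicator {e | Fin.snoc u (u (Fin.last n) + e) ∈ S}
              (fun e => nuStep {e}) e := by rw [← measure_eq_tsum_indicator]
      _ = ∑' e : ℤ × ℤ, wt ℙ W n u
            * Set.indicator {e | Fin.snoc u (u (Fin.last n) + e) ∈ S}
              (fun e => nuStep {e}) e := ENNReal.tsum_mul_left.symm
      _ = ∑' e : ℤ × ℤ, S.indicator (wt ℙ W (n + 1)) (Fin.snoc u (u (Fin.last n) + e)) := by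
          refine tsum_congr fun e => ?_
          by_cases he : Fin.snoc u (u (Fin.last n) + e) ∈ S
          · rw [Set.indicator_of_mem he, Set.indicator_of_mem (by exact he), hwt1,
              Fin.init_snoc, Fin.snoc_last, Fin.snoc_castSucc, add_sub_cancel_left]
          · rw [Set.indicator_of_notMem he, Set.indicator_of_notMem (by exact he), mul_zero]
      _ = ∑' x : ℤ × ℤ, S.indicator (wt ℙ W (n + 1)) (Fin.snoc u x) :=
          (Equiv.addLeft (u (Fin.last n))).tsum_eq
            (fun x => S.indicator (wt ℙ W (n + 1)) (Fin.snoc u x))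

end Walk

/-- The deterministic recursion computing the coalescent trajectory from the walk. -/
def zfun (w : ℕ → ℤ × ℤ) : ℕ → ℤ
  | 0 => 0
  | k + 1 =>
    if 0 ≤ zfun w k then zfun w k + ((w (k + 1)).2 - (w k).2)
    else if zfun w k - ((w (k + 1)).1 - (w k).1) < 0 then
      zfun w k - ((w (k + 1)).1 - (w k).1)
    else (w (k + 1)).2 - (w k).2

lemma zfun_depends (w w' : ℕ → ℤ × ℤ) :
    ∀ k : ℕ, (∀ i ≤ k, w i = w' i) → zfun w k = zfun w' k := by
  intro k
  induction k with
  | zero => intro _; rfl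
  | succ k ihk =>
    intro h
    show (if 0 ≤ zfun w k then zfun w k + ((w (k + 1)).2 - (w k).2)
        else if zfun w k - ((w (k + 1)).1 - (w k).1) < 0 then
          zfun w k - ((w (k + 1)).1 - (w k).1)
        else (w (k + 1)).2 - (w k).2)
      = (if 0 ≤ zfun w' k then zfun w' k + ((w' (k + 1)).2 - (w' k).2)
        else if zfun w' k - ((w' (k + 1)).1 - (w' k).1) < 0 then
          zfun w' k - ((w' (k + 1)).1 - (w' k).1)
        else (w' (k + 1)).2 - (w' k).2)
    rw [ihk (fun i hi => h i (hi.trans (Nat.le_succ k))), h (k + 1) le_rfl,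
      h k (Nat.le_succ k)]

/-- The trajectory value at time `k` as a function of the history tuple. -/
def zfT (k : ℕ) (u : Fin (k + 1) → ℤ × ℤ) : ℤ :=
  zfun (fun i => if h : i < k + 1 then u ⟨i, h⟩ else 0) k

/-- For the coalescent-walk trajectory Z = Z^{(0)} built from a random walk W with
i.i.d. ν-distributed increments, each increment Z_{k+1} - Z_k has the distribution
`stepProb`, conditionally on the past of the walk; in particular Z is a random walk
with this step distribution. -/
theorem coalescent_trajectory_is_random_walk
    {Ω : Type*} [MeasurableSpace Ω] (ℙ : Measure Ω) [IsProbabilityMeasure ℙ]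
    (W : ℕ → Ω → ℤ × ℤ)
    (hW0 : ∀ ω, W 0 ω = (0, 0))
    (hWstep : ∀ k : ℕ, ∀ B : Set Ω,
      MeasurableSet[MeasurableSpace.comap (fun ω => fun i : Fin (k + 1) => W i ω)
        inferInstance] B →
      ∀ s : Set (ℤ × ℤ),
        ℙ (B ∩ {ω | W (k + 1) ω - W k ω ∈ s}) = ℙ B * nuStep s)
    (Z : ℕ → Ω → ℤ)
    (hZ0 : ∀ ω, Z 0 ω = 0)
    (hZrec : ∀ (k : ℕ) (ω : Ω),
      (0 ≤ Z k ω → Z (k + 1) ω = Z k ω + ((W (k + 1) ω).2 - (W k ω).2)) ∧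
      (Z k ω < 0 → Z k ω - ((W (k + 1) ω).1 - (W k ω).1) < 0 →
        Z (k + 1) ω = Z k ω - ((W (k + 1) ω).1 - (W k ω).1)) ∧
      (Z k ω < 0 → 0 ≤ Z k ω - ((W (k + 1) ω).1 - (W k ω).1) →
        Z (k + 1) ω = (W (k + 1) ω).2 - (W k ω).2)) :
    ∀ (k : ℕ) (j : ℤ) (B : Set Ω),
      MeasurableSet[MeasurableSpace.comap (fun ω => fun i : Fin (k + 1) => W i ω)
        inferInstance] B →
      ℙ (B ∩ {ω | Z (k + 1) ω - Z k ω = j}) = stepProb j * ℙ B := by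
  classical
  intro k j B hB
  obtain ⟨S, -, rfl⟩ := hB
  -- representation of Z as a function of the history
  have hZrep : ∀ (m : ℕ) (ω : Ω), Z m ω = zfun (fun i => W i ω) m := by
    intro m ω
    induction m with
    | zero => rw [hZ0 ω]; rfl
    | succ m ihm =>
      obtain ⟨h1, h2, h3⟩ := hZrec m ω
      show Z (m + 1) ω
        = (if 0 ≤ zfun (fun i => W i ω) m then
            zfun (fun i => W i ω) m + ((W (m + 1) ω).2 - (W m ω).2)
          else if zfun (fun i => W i ω) m - ((W (m + 1) ω).1 - (W m ω).1) < 0 then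
            zfun (fun i => W i ω) m - ((W (m + 1) ω).1 - (W m ω).1)
          else (W (m + 1) ω).2 - (W m ω).2)
      rw [← ihm]
      split_ifs with ha hb
      · exact h1 ha
      · exact h2 (by omega) hb
      · exact h3 (by omega) (by omega)
  have hZT : ∀ ω, Z k ω = zfT k (fun i : Fin (k + 1) => W i ω) := by
    intro ω
    rw [hZrep k ω]
    exact zfun_depends _ _ k (fun i hi => by
      rw [dif_pos (by omega : i < k + 1)])
  have hfst : ∀ ω, (W (k + 1) ω - W k ω).1 = (W (k + 1) ω).1 - (W k ω).1 := fun _ => rfl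
  have hsnd : ∀ ω, (W (k + 1) ω - W k ω).2 = (W (k + 1) ω).2 - (W k ω).2 := fun _ => rfl
  have hzdiff : ∀ ω, Z (k + 1) ω - Z k ω = stepFun (Z k ω) (W (k + 1) ω - W k ω) := by
    intro ω
    obtain ⟨h1, h2, h3⟩ := hZrec k ω
    unfold stepFun
    rw [hfst, hsnd]
    split_ifs with ha hb
    · rw [h1 ha]; ring
    · rw [h2 (by omega) hb]; ring
    · rw [h3 (by omega) (by omega)]; try ring
  have hdec : ((fun ω => fun i : Fin (k + 1) => W i ω) ⁻¹' S) ∩ {ω | Z (k + 1) ω - Z k ω = j}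
      = ⋃ u, ((fun ω => fun i : Fin (k + 1) => W i ω) ⁻¹' {u}
          ∩ {ω | W (k + 1) ω - W k ω
              ∈ (if u ∈ S then {p | stepFun (zfT k u) p = j} else ∅)}) := by
    ext ω
    simp only [Set.mem_inter_iff, Set.mem_preimage, Set.mem_setOf_eq, Set.mem_iUnion,
      Set.mem_singleton_iff]
    constructor
    · rintro ⟨hS, hz⟩
      refine ⟨_, rfl, ?_⟩
      rw [if_pos hS]
      show stepFun (zfT k (fun i : Fin (k + 1) => W i ω)) (W (k + 1) ω - W k ω) = j
      rw [← hZT ω, ← hzdiff ω]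
      exact hz
    · rintro ⟨u, rfl, hc⟩
      by_cases hS : (fun i : Fin (k + 1) => W i ω) ∈ S
      · rw [if_pos hS] at hc
        refine ⟨hS, ?_⟩
        rw [hzdiff ω, hZT ω]
        exact hc
      · rw [if_neg hS] at hc
        exact absurd hc (Set.notMem_empty _)
  rw [hdec, slice_lemma ℙ W k (hWstep k) (key_lemma ℙ W hW0 hWstep k) _,
    key_lemma ℙ W hW0 hWstep k S, ← ENNReal.tsum_mul_left]
  refine tsum_congr fun u => ?_
  by_cases hS : u ∈ S
  · rw [if_pos hS, nuStep_stepFun, Set.indicator_of_mem hS, mul_comm]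
  · rw [if_neg hS, measure_empty, mul_zero, Set.indicator_of_notMem hS, mul_zero]
end

section
/- If W̄ is a random walk with i.i.d. ν-distributed increments started at (0,0), then conditionally on the event {(W̄_t)_{0≤t≤n+1} ∈ 𝔚^{A,exc}_{n+2}}, the law of (W̄_t)_{0≤t≤n+1} is uniform on 𝔚^{A,exc}_{n+2}. -/
open MeasureTheory

/-- 𝔚^{A,exc}_{n+2}: walks (W_0,…,W_{n+1}) in the non-negative quadrant, starting and
ending at (0,0), with increments in A. -/
def WExc (n : ℕ) : Set (Fin (n + 2) → ℤ × ℤ) :=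
  {W | W 0 = (0, 0) ∧ W (Fin.last (n + 1)) = (0, 0) ∧
    (∀ t, 0 ≤ (W t).1 ∧ 0 ≤ (W t).2) ∧
    (∀ t : Fin (n + 1), W t.succ - W t.castSucc ∈ AdmissibleSteps)}

lemma nuStep_one : nuStep {((1:ℤ), (-1:ℤ))} = 2⁻¹ := by
  have hms : MeasurableSet ({((1:ℤ),(-1:ℤ))} : Set (ℤ×ℤ)) := measurableSet_singleton _
  rw [nuStep, Measure.add_apply, Measure.smul_apply, Measure.sum_apply _ hms]
  have h2 : ∀ p : ℕ × ℕ, (((2⁻¹ : ENNReal) ^ (p.1 + p.2 + 3)) • Measure.dirac ((-(p.1 : ℤ), (p.2 : ℤ)) : ℤ × ℤ)) {((1:ℤ),(-1:ℤ))} = 0 := by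
    intro p
    rw [Measure.smul_apply, Measure.dirac_apply, Set.indicator_of_notMem]
    · simp
    · simp only [Set.mem_singleton_iff, Prod.mk.injEq, not_and]
      intro h; omega
  simp only [h2, tsum_zero, add_zero, Measure.dirac_apply, smul_eq_mul]
  simp

lemma nuStep_neg (i j : ℕ) : nuStep {((-(i:ℤ)), (j:ℤ))} = 2⁻¹ ^ (i + j + 3) := by
  have hms : MeasurableSet ({((-(i:ℤ)), (j:ℤ))} : Set (ℤ×ℤ)) := measurableSet_singleton _
  rw [nuStep, Measure.add_apply, Measure.smul_apply, Measure.sum_apply _ hms]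
  have h1 : Measure.dirac ((1, -1) : ℤ × ℤ) {((-(i:ℤ)), (j:ℤ))} = 0 := by
    rw [Measure.dirac_apply, Set.indicator_of_notMem]
    simp only [Set.mem_singleton_iff, Prod.mk.injEq, not_and]
    intro h; omega
  rw [h1]
  rw [tsum_eq_single (i, j)]
  · simp [Measure.dirac_apply]
  · intro p hp
    rw [Measure.smul_apply, Measure.dirac_apply, Set.indicator_of_notMem]
    · simp
    · simp only [Set.mem_singleton_iff, Prod.mk.injEq, not_and]
      intro h1 h2
      exact absurd (Prod.ext (by omega) (by omega)) hp

lemma walk_path_prob {Ω : Type*} [MeasurableSpace Ω] (ℙ : Measure Ω) [IsProbabilityMeasure ℙ]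
    (W : ℕ → Ω → ℤ × ℤ) (hW0 : ∀ ω, W 0 ω = (0,0))
    (hWstep : ∀ k : ℕ, ∀ B : Set Ω,
      MeasurableSet[MeasurableSpace.comap (fun ω => fun i : Fin (k + 1) => W i ω)
        inferInstance] B →
      ∀ s : Set (ℤ × ℤ),
        ℙ (B ∩ {ω | W (k + 1) ω - W k ω ∈ s}) = ℙ B * nuStep s)
    (v : ℕ → ℤ × ℤ) (hv0 : v 0 = (0,0)) :
    ∀ k, ℙ {ω | ∀ t ≤ k, W t ω = v t} = ∏ t ∈ Finset.range k, nuStep {v (t+1) - v t} := by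
  intro k; induction k with
  | zero =>
    have : {ω | ∀ t ≤ 0, W t ω = v t} = Set.univ := by
      ext ω
      simp only [Set.mem_setOf_eq, Set.mem_univ, iff_true]
      intro t ht
      rw [Nat.le_zero] at ht; subst ht; rw [hW0, hv0]
    rw [this]
    simp
  | succ k ih =>
    have hset : {ω | ∀ t ≤ k+1, W t ω = v t}
        = {ω | ∀ t ≤ k, W t ω = v t} ∩ {ω | W (k+1) ω - W k ω ∈ ({v (k+1) - v k} : Set (ℤ×ℤ))} := by
      ext ω
      simp only [Set.mem_setOf_eq, Set.mem_inter_iff, Set.mem_singleton_iff]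
      constructor
      · intro h
        exact ⟨fun t ht => h t (ht.trans (Nat.le_succ k)),
          by rw [h (k+1) le_rfl, h k (Nat.le_succ k)]⟩
      · rintro ⟨h1, h2⟩ t ht
        rcases Nat.lt_succ_iff_lt_or_eq.mp (Nat.lt_succ_of_le ht) with h | h
        · exact h1 t (Nat.lt_succ_iff.mp h)
        · subst h
          have hk := h1 k le_rfl
          rw [hk] at h2
          exact sub_left_inj.mp h2
    have hB : MeasurableSet[MeasurableSpace.comap
        (fun ω => fun i : Fin (k+1) => W i ω) inferInstance] {ω | ∀ t ≤ k, W t ω = v t} := by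
      refine ⟨{f : Fin (k+1) → ℤ×ℤ | ∀ i : Fin (k+1), f i = v i}, ?_, ?_⟩
      · have he : {f : Fin (k+1) → ℤ×ℤ | ∀ i, f i = v i}
            = ⋂ i : Fin (k+1), (fun f : Fin (k+1) → ℤ×ℤ => f i) ⁻¹' {v i} := by
          ext f; simp
        rw [he]
        exact MeasurableSet.iInter fun i => (measurable_pi_apply i) (measurableSet_singleton _)
      · ext ω
        simp only [Set.mem_preimage, Set.mem_setOf_eq]
        constructor
        · intro h t ht
          exact h ⟨t, Nat.lt_succ_of_le ht⟩
        · intro h i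
          exact h i (Nat.lt_succ_iff.mp i.isLt)
    rw [hset, hWstep k _ hB, ih, Finset.prod_range_succ]

lemma nuStep_mem (d : ℤ × ℤ) (hd : d ∈ AdmissibleSteps) :
    nuStep {d} = (2⁻¹ : ENNReal) ^ (3 + d.2 - d.1).toNat := by
  rcases hd with h | ⟨h1, h2⟩
  · simp only [Set.mem_singleton_iff] at h; subst h
    rw [nuStep_one]
    norm_num
  · obtain ⟨i, hi⟩ : ∃ i : ℕ, d.1 = -(i:ℤ) := ⟨(-d.1).toNat, by omega⟩
    obtain ⟨j, hj⟩ : ∃ j : ℕ, d.2 = (j:ℤ) := ⟨d.2.toNat, by omega⟩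
    have hde : d = (-(i:ℤ), (j:ℤ)) := Prod.ext hi hj
    rw [hde, nuStep_neg i j]
    congr 1
    simp only
    omega

lemma nuStep_nonneg_exp (d : ℤ × ℤ) (hd : d ∈ AdmissibleSteps) : 0 ≤ 3 + d.2 - d.1 := by
  rcases hd with h | ⟨h1, h2⟩
  · simp only [Set.mem_singleton_iff] at h; subst h; norm_num
  · omega

/-- If W is a random walk started at (0,0) with i.i.d. ν-distributed increments, then
conditionally on the event that (W_0,…,W_{n+1}) ∈ 𝔚^{A,exc}_{n+2}, the law of
(W_0,…,W_{n+1}) is the uniform distribution on 𝔚^{A,exc}_{n+2}: the conditional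
measure gives the same probability to every walk of 𝔚^{A,exc}_{n+2} and is
concentrated on 𝔚^{A,exc}_{n+2}. -/
theorem conditioned_walk_uniform
    {Ω : Type*} [MeasurableSpace Ω] (ℙ : Measure Ω) [IsProbabilityMeasure ℙ]
    (W : ℕ → Ω → ℤ × ℤ)
    (hW0 : ∀ ω, W 0 ω = (0, 0))
    (hWstep : ∀ k : ℕ, ∀ B : Set Ω,
      MeasurableSet[MeasurableSpace.comap (fun ω => fun i : Fin (k + 1) => W i ω)
        inferInstance] B →
      ∀ s : Set (ℤ × ℤ),
        ℙ (B ∩ {ω | W (k + 1) ω - W k ω ∈ s}) = ℙ B * nuStep s)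
    (n : ℕ)
    (E : Set Ω) (hE : E = {ω | (fun t : Fin (n + 2) => W t ω) ∈ WExc n})
    (hEpos : 0 < ℙ E) :
    (∀ w ∈ WExc n, ∀ w' ∈ WExc n,
      ProbabilityTheory.cond ℙ E {ω | ∀ t : Fin (n + 2), W t ω = w t} =
        ProbabilityTheory.cond ℙ E {ω | ∀ t : Fin (n + 2), W t ω = w' t}) ∧
    ProbabilityTheory.cond ℙ E {ω | (fun t : Fin (n + 2) => W t ω) ∈ WExc n} = 1 := by
  constructor
  · -- uniform probabilities
    have key : ∀ u ∈ WExc n,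
        ProbabilityTheory.cond ℙ E {ω | ∀ t : Fin (n + 2), W t ω = u t}
          = (ℙ E)⁻¹ * (2⁻¹ : ENNReal) ^ (3 * (n + 1)) := by
      intro u hu
      obtain ⟨hu0, hulast, _, hustep⟩ := hu
      -- extend u to ℕ
      set v : ℕ → ℤ × ℤ := fun t => if h : t < n + 2 then u ⟨t, h⟩ else (0, 0) with hv
      have hv0 : v 0 = (0, 0) := by simpa [hv] using hu0
      have hvlast : v (n + 1) = (0, 0) := by
        simp only [hv, dif_pos (show n + 1 < n + 2 by omega)]
        exact hulast
      have hvstep : ∀ t ∈ Finset.range (n + 1), v (t + 1) - v t ∈ AdmissibleSteps := by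
        intro t ht
        rw [Finset.mem_range] at ht
        have h1 : t + 1 < n + 2 := by omega
        have h2 : t < n + 2 := by omega
        have := hustep ⟨t, ht⟩
        simpa [hv, dif_pos h1, dif_pos h2, Fin.succ, Fin.castSucc, Fin.castAdd, Fin.castLE] using this
      -- event identification
      have hevent : {ω | ∀ t : Fin (n + 2), W t ω = u t} = {ω | ∀ t ≤ n + 1, W t ω = v t} := by
        ext ω
        simp only [Set.mem_setOf_eq]
        constructor
        · intro h t ht
          have hlt : t < n + 2 := by omega
          simpa [hv, dif_pos hlt] using h ⟨t, hlt⟩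
        · intro h t
          have := h t.val (by omega)
          simpa [hv, t.isLt, Fin.eta] using this
      -- probability of the path
      have hprob : ℙ {ω | ∀ t : Fin (n + 2), W t ω = u t} = (2⁻¹ : ENNReal) ^ (3 * (n + 1)) := by
        rw [hevent, walk_path_prob ℙ W hW0 hWstep v hv0 (n + 1)]
        have hfac : ∀ t ∈ Finset.range (n + 1), nuStep {v (t + 1) - v t}
            = (2⁻¹ : ENNReal) ^ (3 + (v (t+1) - v t).2 - (v (t+1) - v t).1).toNat :=
          fun t ht => nuStep_mem _ (hvstep t ht)
        rw [Finset.prod_congr rfl hfac, Finset.prod_pow_eq_pow_sum]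
        congr 1
        -- sum of exponents
        have hc : ((∑ t ∈ Finset.range (n + 1),
            (3 + (v (t+1) - v t).2 - (v (t+1) - v t).1).toNat : ℕ) : ℤ) = 3 * (n + 1) := by
          push_cast
          have heach : ∀ t ∈ Finset.range (n + 1),
              (((3 + (v (t+1) - v t).2 - (v (t+1) - v t).1).toNat : ℤ))
                = 3 + ((v (t+1)).2 - (v t).2) - ((v (t+1)).1 - (v t).1) := by
            intro t ht
            have := nuStep_nonneg_exp _ (hvstep t ht)
            simp only [Prod.snd_sub, Prod.fst_sub] at this ⊢
            omega
          rw [Finset.sum_congr rfl heach]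
          have hs2 : ∑ t ∈ Finset.range (n + 1), ((v (t+1)).2 - (v t).2)
              = (v (n+1)).2 - (v 0).2 := Finset.sum_range_sub (fun t => (v t).2) (n+1)
          have hs1 : ∑ t ∈ Finset.range (n + 1), ((v (t+1)).1 - (v t).1)
              = (v (n+1)).1 - (v 0).1 := Finset.sum_range_sub (fun t => (v t).1) (n+1)
          rw [Finset.sum_sub_distrib, Finset.sum_add_distrib, hs2, hs1, hv0, hvlast]
          simp only [Finset.sum_const, Finset.card_range, nsmul_eq_mul]
          push_cast
          ring
        exact_mod_cast hc
      -- the path event is contained in E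
      have hsub : {ω | ∀ t : Fin (n + 2), W t ω = u t} ⊆ E := by
        rw [hE]
        intro ω hω
        simp only [Set.mem_setOf_eq] at hω ⊢
        have : (fun t : Fin (n + 2) => W t ω) = u := funext hω
        rw [this]
        exact ⟨hu0, hulast, ‹_›, hustep⟩
      rw [ProbabilityTheory.cond, Measure.smul_apply, smul_eq_mul,
        Measure.restrict_eq_self ℙ hsub, hprob]
    intro w hw w' hw'
    rw [key w hw, key w' hw']
  · have hEE : {ω | (fun t : Fin (n + 2) => W t ω) ∈ WExc n} = E := hE.symm
    rw [hEE, ProbabilityTheory.cond, Measure.smul_apply, smul_eq_mul,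
      Measure.restrict_apply_self]
    exact ENNReal.inv_mul_cancel hEpos.ne' (measure_ne_top ℙ E)
end
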